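/- Let n be a positive integer and for q = 1,2,3 let α₁q, α₂q, α₃q be integers, each triple satisfying conditions (2.9), and let C⁽q⁾(i,j,k) = α₁q·i + α₂q·j + α₃q·k on (ZMod n)³. If the determinant d₃ of the 3×3 matrix (αₚq) satisfies gcd(d₃,n) = 1, then the three cubes are orthogonal: the map (i,j,k) ↦ (C⁽¹⁾(i,j,k), C⁽²⁾(i,j,k), C⁽³⁾(i,j,k)) from (ZMod n)³ to (ZMod n)³ is injective. -/

import Mathlib

/-- Conditions (2.9) on the parameters `α₁, α₂, α₃` of a linear cube modulo `n`,
with `A = α₁ + α₂ + α₃`. -/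
def Cond29 (n : ℕ) (α₁ α₂ α₃ : ℤ) : Prop :=
  Int.gcd α₁ n = 1 ∧ Int.gcd α₂ n = 1 ∧ Int.gcd α₃ n = 1 ∧
  Int.gcd (α₁ + α₂) n = 1 ∧ Int.gcd (α₁ + α₃) n = 1 ∧ Int.gcd (α₂ + α₃) n = 1 ∧
  Int.gcd (α₁ - α₂) n = 1 ∧ Int.gcd (α₁ - α₃) n = 1 ∧ Int.gcd (α₂ - α₃) n = 1 ∧
  Int.gcd (α₁ + α₂ + α₃) n = 1 ∧
  Int.gcd (α₁ + α₂ + α₃ - 2 * α₁) n = 1 ∧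
  Int.gcd (α₁ + α₂ + α₃ - 2 * α₂) n = 1 ∧
  Int.gcd (α₁ + α₂ + α₃ - 2 * α₃) n = 1

theorem aux_isUnit_cast (n : ℕ) (d : ℤ) (h : Int.gcd d n = 1) :
    IsUnit ((d : ZMod n)) := by
  have hc : IsCoprime d (n : ℤ) := Int.isCoprime_iff_gcd_eq_one.mpr h
  obtain ⟨a, b, hab⟩ := hc
  refine IsUnit.of_mul_eq_one ((a : ZMod n)) ?_
  have := congrArg (fun x : ℤ => (x : ZMod n)) hab
  push_cast at this
  rw [ZMod.natCast_self] at this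
  rw [mul_comm]
  simpa using this

/-- **Theorem 2.6.** Let `C⁽q⁾(i,j,k) = α₁q·i + α₂q·j + α₃q·k`
(`q = 1,2,3`), each triple satisfying conditions (2.9).  If the determinant `d₃`
of the matrix `(αₚq)` is coprime to `n`, the three cubes are orthogonal. -/
theorem orthogonal_pandiagonal_latin_cubes
    (n : ℕ) (hn : 0 < n) (α : Fin 3 → Fin 3 → ℤ)
    (hc : ∀ q : Fin 3, Cond29 n (α 0 q) (α 1 q) (α 2 q))
    (hdet : Int.gcd (Matrix.det (Matrix.of fun p q : Fin 3 => α p q)) n = 1) :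
    Function.Injective (fun v : ZMod n × ZMod n × ZMod n => fun q : Fin 3 =>
      (α 0 q : ZMod n) * v.1 + (α 1 q : ZMod n) * v.2.1 + (α 2 q : ZMod n) * v.2.2) := by
  set M : Matrix (Fin 3) (Fin 3) (ZMod n) :=
    Matrix.of fun q p : Fin 3 => ((α p q : ℤ) : ZMod n) with hM
  have hMdet : IsUnit M.det := by
    have : M = (Matrix.transpose (Matrix.of fun p q : Fin 3 => α p q)).map (Int.cast : ℤ → ZMod n) := by
      ext q p; rfl
    have h2 : M.det = (((Matrix.of fun p q : Fin 3 => α p q).det : ℤ) : ZMod n) := by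
      rw [this,
        show ((Matrix.of fun p q : Fin 3 => α p q).transpose.map (Int.cast : ℤ → ZMod n)) =
          (Int.castRingHom (ZMod n)).mapMatrix (Matrix.of fun p q : Fin 3 => α p q).transpose
          from rfl,
        ← RingHom.map_det, Matrix.det_transpose]
      rfl
    rw [h2]
    exact aux_isUnit_cast n _ hdet
  have hInv : Invertible M := M.invertibleOfIsUnitDet hMdet
  have hinj : Function.Injective M.mulVec := by
    intro x y hxy
    have := congrArg (fun z => (⅟M).mulVec z) hxy
    simpa [Matrix.mulVec_mulVec] using this
  intro v w h
  have hx : M.mulVec ![v.1, v.2.1, v.2.2] = M.mulVec ![w.1, w.2.1, w.2.2] := by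
    funext q
    have hq := congrFun h q
    simp only at hq
    simpa [Matrix.mulVec, dotProduct, Fin.sum_univ_three, hM, mul_comm] using hq
  have := hinj hx
  have h0 := congrFun this 0
  have h1 := congrFun this 1
  have h2 := congrFun this 2
  simp only [Matrix.cons_val_zero, Matrix.cons_val_one, Matrix.head_cons] at h0 h1 h2
  exact Prod.ext h0 (Prod.ext h1 h2)
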